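/- Let D ≥ 1, μ ∈ ℝ^D, let Λ be a symmetric positive definite D×D real matrix, and let α > 0, β > 0. Then for every θ ∈ ℝ^D, the marginal of the Normal-Gamma density over τ is a multivariate location-scale Student-t density: ∫₀^∞ NG(θ, τ; μ, Λ, α, β) dτ = T_D(θ; 2α, μ, (β/α)·Λ⁻¹). -/

import Mathlib

open Real MeasureTheory Matrix

/-- Univariate Gaussian density `N(y; m, v)` with mean `m`, variance `v`. -/
noncomputable def gauss1 (y m v : ℝ) : ℝ :=
  (2 * π * v) ^ (-(1 : ℝ) / 2) * Real.exp (-((y - m) ^ 2) / (2 * v))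

/-- Multivariate Gaussian density in precision form: `N(θ; μ, P⁻¹)` with precision matrix `P`. -/
noncomputable def gaussND {ι : Type*} [Fintype ι] [DecidableEq ι]
    (θ μ : ι → ℝ) (P : Matrix ι ι ℝ) : ℝ :=
  (2 * π) ^ (-(Fintype.card ι : ℝ) / 2) * P.det ^ ((1 : ℝ) / 2) *
    Real.exp (-(1 / 2) * ((θ - μ) ⬝ᵥ (P *ᵥ (θ - μ))))

/-- Gamma density `G(τ; α, β)` with shape `α` and rate `β`. -/
noncomputable def gammaPdf (τ α β : ℝ) : ℝ :=
  β ^ α / Real.Gamma α * τ ^ (α - 1) * Real.exp (-β * τ)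

/-- Normal-Gamma density `NG(θ, τ; μ, Λ, α, β) = N(θ; μ, (τΛ)⁻¹) · G(τ; α, β)`. -/
noncomputable def normalGamma {ι : Type*} [Fintype ι] [DecidableEq ι]
    (θ : ι → ℝ) (τ : ℝ) (μ : ι → ℝ) (Λ : Matrix ι ι ℝ) (α β : ℝ) : ℝ :=
  gaussND θ μ (τ • Λ) * gammaPdf τ α β

/-- Location-scale Student-t density `T(y; ν, m, s²)`. -/
noncomputable def studentT (y ν m s2 : ℝ) : ℝ :=
  Real.Gamma ((ν + 1) / 2) / (Real.sqrt (π * ν * s2) * Real.Gamma (ν / 2)) *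
    (1 + (y - m) ^ 2 / (ν * s2)) ^ (-((ν + 1) / 2))

/-- Multivariate location-scale Student-t density `T_D(θ; ν, μ, Σ)`. -/
noncomputable def multiStudentT {ι : Type*} [Fintype ι] [DecidableEq ι]
    (θ : ι → ℝ) (ν : ℝ) (μ : ι → ℝ) (S : Matrix ι ι ℝ) : ℝ :=
  Real.Gamma ((ν + Fintype.card ι) / 2) /
      (Real.Gamma (ν / 2) * (ν * π) ^ ((Fintype.card ι : ℝ) / 2) * S.det ^ ((1 : ℝ) / 2)) *
    (1 + (θ - μ) ⬝ᵥ (S⁻¹ *ᵥ (θ - μ)) / ν) ^ (-((ν + Fintype.card ι) / 2))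

/-- The digamma function: the derivative of `ln ∘ Γ`. -/
noncomputable def digamma (x : ℝ) : ℝ := deriv (fun t => Real.log (Real.Gamma t)) x

/-- The Beta function `B(a, b) = Γ(a)Γ(b)/Γ(a+b)`. -/
noncomputable def betaFn (a b : ℝ) : ℝ := Real.Gamma a * Real.Gamma b / Real.Gamma (a + b)

/-- marginalizing the Normal-Gamma density over the precision τ yields a
multivariate location-scale Student-t density. -/
theorem normalGamma_marginal_theta (D : ℕ) (hD : 1 ≤ D) (μ : Fin D → ℝ)
    (Λ : Matrix (Fin D) (Fin D) ℝ) (hΛ : Λ.PosDef) (α β : ℝ) (hα : 0 < α) (hβ : 0 < β)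
    (θ : Fin D → ℝ) :
    ∫ τ in Set.Ioi (0 : ℝ), normalGamma θ τ μ Λ α β =
      multiStudentT θ (2 * α) μ ((β / α) • Λ⁻¹) := by
  classical
  set v : Fin D → ℝ := θ - μ with hv
  set q : ℝ := v ⬝ᵥ (Λ *ᵥ v) with hqdef
  have hq : 0 ≤ q := by simpa using hΛ.posSemidef.dotProduct_mulVec_nonneg v
  have hdet : 0 < Λ.det := hΛ.det_pos
  have hc : 0 < β + q / 2 := by positivity
  have hπ : (0 : ℝ) < π := Real.pi_pos
  set s : ℝ := α + (D : ℝ) / 2 with hsdef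
  have hs : 0 < s := by positivity
  -- Step 1: rewrite the integrand
  have hstep : ∀ τ ∈ Set.Ioi (0 : ℝ), normalGamma θ τ μ Λ α β =
      ((2 * π) ^ (-(D : ℝ) / 2) * Λ.det ^ ((1 : ℝ) / 2) * (β ^ α / Real.Gamma α)) *
        (τ ^ (s - 1) * Real.exp (-((β + q / 2) * τ))) := by
    intro τ hτ
    have hτ0 : (0 : ℝ) < τ := hτ
    simp only [normalGamma, gaussND, gammaPdf, Matrix.det_smul, Matrix.smul_mulVec,
      dotProduct_smul, smul_eq_mul, Fintype.card_fin, ← hv, ← hqdef]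
    rw [Real.mul_rpow (by positivity) hdet.le, ← Real.rpow_natCast τ D,
      ← Real.rpow_mul hτ0.le,
      show s - 1 = (D : ℝ) * (1 / 2) + (α - 1) by rw [hsdef]; ring,
      Real.rpow_add hτ0,
      show -((β + q / 2) * τ) = (-(1 / 2) * (τ * q)) + (-β * τ) by ring,
      Real.exp_add]
    ring
  rw [MeasureTheory.setIntegral_congr_fun measurableSet_Ioi hstep,
    MeasureTheory.integral_const_mul,
    Real.integral_rpow_mul_exp_neg_mul_Ioi hs hc]
  -- Step 2: simplify the Student-t side
  have hαne : (α : ℝ) ≠ 0 := hα.ne'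
  have hβα : (0 : ℝ) < β / α := by positivity
  have hu : IsUnit Λ.det := hdet.ne'.isUnit
  have hinv : ((β / α) • Λ⁻¹)⁻¹ = (α / β) • Λ := by
    refine Matrix.inv_eq_right_inv ?_
    rw [Matrix.smul_mul, Matrix.mul_smul, smul_smul, Matrix.nonsing_inv_mul Λ hu,
      show (β / α) * (α / β) = 1 by field_simp, one_smul]
  have hSdet : ((β / α) • Λ⁻¹).det = (β / α) ^ D * Λ.det⁻¹ := by
    rw [Matrix.det_smul, Fintype.card_fin, Matrix.det_nonsing_inv, Ring.inverse_eq_inv]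
  have hbase : 1 + v ⬝ᵥ (((β / α) • Λ⁻¹)⁻¹ *ᵥ v) / (2 * α) = (β + q / 2) / β := by
    rw [hinv, Matrix.smul_mulVec, dotProduct_smul, smul_eq_mul, ← hqdef]
    field_simp
  rw [multiStudentT, Fintype.card_fin, ← hv, hbase, hSdet,
    show (2 * α) / 2 = α by ring, show ((2 * α + (D : ℝ)) / 2) = s by rw [hsdef]; ring]
  -- Step 3: scalar rpow algebra
  have hΓα : 0 < Real.Gamma α := Real.Gamma_pos_of_pos hα
  have hΓs : 0 < Real.Gamma s := Real.Gamma_pos_of_pos hs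
  rw [Real.div_rpow hc.le hβ.le, Real.rpow_neg (by positivity),
    Real.div_rpow (by norm_num) hc.le, Real.mul_rpow (by positivity) (by positivity),
    Real.one_rpow, Real.mul_rpow (by positivity) (le_of_lt (by positivity)),
    ← Real.rpow_natCast (β / α) D]
  have e1 : (2 : ℝ) ^ (-(D : ℝ) / 2) = ((2 : ℝ) ^ ((D : ℝ) / 2))⁻¹ := by
    rw [neg_div, Real.rpow_neg (by norm_num)]
  have e2 : (π : ℝ) ^ (-(D : ℝ) / 2) = (π ^ ((D : ℝ) / 2))⁻¹ := by
    rw [neg_div, Real.rpow_neg hπ.le]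
  have e3 : ((β / α) ^ (D : ℝ) * Λ.det⁻¹) ^ ((1 : ℝ) / 2)
      = (β ^ ((D : ℝ) / 2) / α ^ ((D : ℝ) / 2)) * (Λ.det ^ ((1 : ℝ) / 2))⁻¹ := by
    rw [Real.mul_rpow (by positivity) (by positivity), ← Real.rpow_mul hβα.le,
      show (D : ℝ) * (1 / 2) = (D : ℝ) / 2 by ring, Real.inv_rpow hdet.le,
      Real.div_rpow hβ.le hα.le]
  have e4 : ((2 : ℝ) * α) ^ ((D : ℝ) / 2) = 2 ^ ((D : ℝ) / 2) * α ^ ((D : ℝ) / 2) :=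
    Real.mul_rpow (by norm_num) hα.le
  have e5 : β ^ s = β ^ α * β ^ ((D : ℝ) / 2) := by rw [hsdef, Real.rpow_add hβ]
  have e6 : β ^ (-s) = (β ^ s)⁻¹ := Real.rpow_neg hβ.le s
  rw [e1, e2, e3, e4, e6, e5]
  have p1 : (0 : ℝ) < (2 : ℝ) ^ ((D : ℝ) / 2) := by positivity
  have p2 : (0 : ℝ) < π ^ ((D : ℝ) / 2) := by positivity
  have p3 : (0 : ℝ) < α ^ ((D : ℝ) / 2) := by positivity
  have p4 : (0 : ℝ) < β ^ ((D : ℝ) / 2) := by positivity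
  have p5 : (0 : ℝ) < Λ.det ^ ((1 : ℝ) / 2) := by positivity
  have p6 : (0 : ℝ) < (β + q / 2) ^ s := by positivity
  have p7 : (0 : ℝ) < β ^ α := by positivity
  field_simp
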